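/- For any numerical polynomial ω(s) = Σ_{i=0}^d a_i C(s+i, i) of degree d ≥ 1 with integer standard coefficients, the polynomial v(s) = ω(s + a_d) − C(s+1+d+a_d, d+1) + C(s+d+1, d+1) has degree strictly less than d. -/

import Mathlib

open Filter Finset Polynomial

/-- Auxiliary polynomial `∏ j < k, (X + (c - j))`. -/
noncomputable def qcp (c : ℚ) (k : ℕ) : Polynomial ℚ :=
  ∏ j ∈ Finset.range k, (X + C (c - j))

lemma qcp_monic (c : ℚ) (k : ℕ) : (qcp c k).Monic :=
  monic_prod_of_monic _ _ fun _ _ => monic_X_add_C _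

lemma qcp_natDegree (c : ℚ) (k : ℕ) : (qcp c k).natDegree = k := by
  rw [qcp, natDegree_prod _ _ (fun i _ => (monic_X_add_C _).ne_zero)]
  trans ∑ _i ∈ Finset.range k, 1
  · exact Finset.sum_congr rfl fun i _ => natDegree_X_add_C _
  · simp

lemma qcp_eval (c : ℚ) (k : ℕ) (s : ℚ) :
    (qcp c k).eval s = ∏ j ∈ Finset.range k, (s + c - j) := by
  rw [qcp, eval_prod]
  exact Finset.prod_congr rfl fun j _ => by simp; ring

lemma qcp_nextCoeff (c : ℚ) (k : ℕ) :
    (qcp c k).nextCoeff = ∑ j ∈ Finset.range k, (c - j) := by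
  rw [qcp, Polynomial.Monic.nextCoeff_prod _ _ fun _ _ => monic_X_add_C _]
  exact Finset.sum_congr rfl fun j _ => nextCoeff_X_add_C _

lemma qcp_coeff_d (c : ℚ) (d : ℕ) :
    (qcp c (d + 1)).coeff d = ∑ j ∈ Finset.range (d + 1), (c - j) := by
  rw [← qcp_nextCoeff]
  have h1 : 0 < (qcp c (d + 1)).natDegree := by rw [qcp_natDegree]; omega
  have h2 := nextCoeff_of_natDegree_pos h1
  rw [qcp_natDegree] at h2
  simpa using h2.symm

lemma qcp_coeff_self (c : ℚ) (k : ℕ) : (qcp c k).coeff k = 1 := by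
  have := (qcp_monic c k).coeff_natDegree
  rwa [qcp_natDegree] at this

lemma qcp_coeff_gt (c : ℚ) (k n : ℕ) (h : k < n) : (qcp c k).coeff n = 0 :=
  coeff_eq_zero_of_natDegree_lt (by rw [qcp_natDegree]; omega)

/-- The binomial coefficient polynomial C(x, k) = x(x-1)...(x-k+1)/k! over ℚ. -/
noncomputable def qchoose (x : ℚ) (k : ℕ) : ℚ :=
  (∏ i ∈ Finset.range k, (x - i)) / (Nat.factorial k)

lemma qchoose_eq (c s : ℚ) (k : ℕ) :
    qchoose (s + c) k = (qcp c k).eval s / (Nat.factorial k) := by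
  rw [qchoose, qcp_eval]

/-- Well-definedness of minimizing coefficients: for ω(s) = Σ a_i C(s+i,i) of degree d ≥ 1,
the polynomial v(s) = ω(s + a_d) - C(s+1+d+a_d, d+1) + C(s+d+1, d+1) has degree < d. -/
theorem minimizing_step_degree (d : ℕ) (hd : 1 ≤ d) (a : Fin (d + 1) → ℤ)
    (ha : a (Fin.last d) ≠ 0) :
    ∃ p : Polynomial ℚ, p.natDegree < d ∧ ∀ s : ℚ,
      p.eval s
        = (∑ i : Fin (d + 1),
            (a i : ℚ) * qchoose (s + (a (Fin.last d) : ℚ) + (i : ℕ)) (i : ℕ))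
          - qchoose (s + 1 + (d : ℚ) + (a (Fin.last d) : ℚ)) (d + 1)
          + qchoose (s + (d : ℚ) + 1) (d + 1) := by
  set A : ℚ := (a (Fin.last d) : ℚ) with hA
  set p : Polynomial ℚ :=
    (∑ i : Fin (d + 1), C ((a i : ℚ) / (((i : ℕ).factorial : ℚ))) * qcp (A + ((i : ℕ) : ℚ)) (i : ℕ))
      - C ((1 : ℚ) / ((d + 1).factorial : ℚ)) * qcp (1 + d + A) (d + 1)
      + C ((1 : ℚ) / ((d + 1).factorial : ℚ)) * qcp ((d : ℚ) + 1) (d + 1) with hp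
  have hsum : ∀ n, d ≤ n →
      (∑ i : Fin (d + 1), C ((a i : ℚ) / (((i : ℕ).factorial : ℚ))) *
          qcp (A + ((i : ℕ) : ℚ)) (i : ℕ)).coeff n
        = if n = d then A / (Nat.factorial d) else 0 := by
    intro n hn
    rw [finset_sum_coeff, Fin.sum_univ_castSucc]
    have h0 : ∀ i : Fin d, (C ((a i.castSucc : ℚ) / (((i.castSucc : ℕ).factorial : ℚ))) *
        qcp (A + ((i.castSucc : ℕ) : ℚ)) (i.castSucc : ℕ)).coeff n = 0 := by
      intro i
      have hi : (i.castSucc : ℕ) < d := by simpa using i.isLt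
      rw [coeff_C_mul, qcp_coeff_gt _ _ _ (by omega), mul_zero]
    rw [Finset.sum_congr rfl fun i _ => h0 i, Finset.sum_const_zero, zero_add]
    simp only [Fin.val_last]
    rw [coeff_C_mul]
    rcases eq_or_lt_of_le hn with h | h
    · rw [← h, qcp_coeff_self, if_pos rfl, mul_one, hA]
    · rw [qcp_coeff_gt _ _ _ h, mul_zero, if_neg (by omega)]
  refine ⟨p, ?_, ?_⟩
  · -- degree bound
    have hdeg : ∀ n, d ≤ n → p.coeff n = 0 := by
      intro n hn
      rcases eq_or_lt_of_le hn with hn' | hn'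
      · -- n = d : cancellation of next-to-leading coefficients
        subst hn'
        simp only [hp, coeff_add, coeff_sub, hsum d le_rfl, if_pos rfl, coeff_C_mul,
          qcp_coeff_d, ↓reduceIte]
        have e1 : ∑ j ∈ Finset.range (d + 1), ((1 : ℚ) + d + A - j)
            = (d + 1) * (1 + d + A) - ∑ j ∈ Finset.range (d + 1), (j : ℚ) := by
          rw [Finset.sum_sub_distrib]; simp [mul_comm]; ring
        have e2 : ∑ j ∈ Finset.range (d + 1), ((d : ℚ) + 1 - j)
            = (d + 1) * ((d : ℚ) + 1) - ∑ j ∈ Finset.range (d + 1), (j : ℚ) := by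
          rw [Finset.sum_sub_distrib]; simp [mul_comm]; ring
        rw [e1, e2]
        have hfd : (Nat.factorial (d + 1) : ℚ) = (d + 1) * Nat.factorial d := by
          rw [Nat.factorial_succ]; push_cast; ring
        have hfd0 : (Nat.factorial d : ℚ) ≠ 0 := by positivity
        have hfd1 : ((d : ℚ) + 1) ≠ 0 := by positivity
        rw [hfd]
        field_simp
        ring
      · -- n > d : leading coefficients of the two degree-(d+1) terms cancel
        have htop : ∀ c : ℚ, (qcp c (d + 1)).coeff n = if n = d + 1 then 1 else 0 := by
          intro c
          rcases eq_or_ne n (d + 1) with h | h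
          · subst h; rw [qcp_coeff_self, if_pos rfl]
          · rw [qcp_coeff_gt _ _ _ (by omega), if_neg h]
        simp only [hp, coeff_add, coeff_sub, hsum n hn, if_neg (by omega : ¬ n = d),
          coeff_C_mul, htop]
        ring
    have hle : p.natDegree ≤ d - 1 := by
      rw [Polynomial.natDegree_le_iff_coeff_eq_zero]
      intro m hm
      exact hdeg m (by omega)
    omega
  · -- evaluation
    intro s
    have hterm : ∀ i : Fin (d + 1),
        ((a i : ℚ) / (((i : ℕ).factorial : ℚ))) * (qcp (A + ((i : ℕ) : ℚ)) (i : ℕ)).eval s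
          = (a i : ℚ) * qchoose (s + A + ((i : ℕ) : ℚ)) (i : ℕ) := by
      intro i
      have h1 : s + A + ((i : ℕ) : ℚ) = s + (A + ((i : ℕ) : ℚ)) := by ring
      rw [h1, qchoose_eq]
      ring
    have h2 : s + 1 + (d : ℚ) + A = s + (1 + d + A) := by ring
    have h3 : s + (d : ℚ) + 1 = s + ((d : ℚ) + 1) := by ring
    simp only [hp, eval_add, eval_sub, eval_finset_sum, eval_mul, eval_C, hterm]
    rw [h2, h3, qchoose_eq, qchoose_eq]
    ring
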